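/- Let M = U(k,n) be the uniform matroid of rank k on n elements with k ≥ n − 3. Then the collection 𝒜 of dependent sets of the combinatorial derived matroid δM equals 𝒜₀; that is, 𝒜₀ is already closed under the operations ↑ and ε, so δM = (𝒞, 𝒜₀). -/

import Mathlib

open Set

namespace DM

variable {α : Type*}

/-- A circuit of a matroid: an inclusion-minimal dependent set. -/
def IsCircuit (M : Matroid α) (C : Set α) : Prop :=
  M.Dep C ∧ ∀ D, M.Dep D → D ⊆ C → D = C

/-- The collection 𝒞 of circuits of `M`. -/
def circuits (M : Matroid α) : Set (Set α) := {C | IsCircuit M C}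

/-- The rank of a set: the maximal cardinality of an independent subset. -/
noncomputable def rk (M : Matroid α) (S : Set α) : ℕ :=
  sSup {m : ℕ | ∃ I, I ⊆ S ∧ M.Indep I ∧ I.ncard = m}

/-- The nullity function n(S) = |S| - r(S). -/
noncomputable def nullity (M : Matroid α) (S : Set α) : ℕ := S.ncard - rk M S

/-- The support of a family of sets. -/
def supp (A : Set (Set α)) : Set α := ⋃₀ A

/-- The initial collection 𝒜₀ = {A ⊆ 𝒞 : |A| > n(supp A)}. -/
noncomputable def A0 (M : Matroid α) : Set (Set (Set α)) :=
  {A | A ⊆ circuits M ∧ nullity M (supp A) < A.ncard}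

/-- The operation ε. -/
def eps (X : Set (Set (Set α))) : Set (Set (Set α)) :=
  X ∪ {B | ∃ A₁ ∈ X, ∃ A₂ ∈ X, A₁ ∩ A₂ ∉ X ∧ ∃ C ∈ A₁ ∩ A₂, B = (A₁ ∪ A₂) \ {C}}

/-- The up-closure ↑X = {A ⊆ 𝒞 : ∃ A' ∈ X, A' ⊆ A} within the ground collection 𝒞. -/
def up (𝒞 : Set (Set α)) (X : Set (Set (Set α))) : Set (Set (Set α)) :=
  {A | A ⊆ 𝒞 ∧ ∃ A' ∈ X, A' ⊆ A}

/-- The increasing sequence 𝒜ᵢ with 𝒜₍ᵢ₊₁₎ = ↑ε(𝒜ᵢ). -/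
noncomputable def Ai (M : Matroid α) : ℕ → Set (Set (Set α))
  | 0 => A0 M
  | (i+1) => up (circuits M) (eps (Ai M i))

/-- 𝒜 = ⋃ᵢ 𝒜ᵢ : the collection of dependent sets of the combinatorial derived matroid δM. -/
noncomputable def derivedDep (M : Matroid α) : Set (Set (Set α)) := ⋃ i, Ai M i

section Aux

variable {M : Matroid α} {k : ℕ}

/-- In the uniform matroid, circuits are exactly the (k+1)-subsets of the ground set. -/
lemma circuit_char (hE : M.E.Finite)
    (hunif : ∀ I : Set α, M.Indep I ↔ I ⊆ M.E ∧ I.ncard ≤ k) {C : Set α} :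
    IsCircuit M C ↔ C ⊆ M.E ∧ C.ncard = k + 1 := by
  constructor
  · rintro ⟨hdep, hmin⟩
    obtain ⟨hni, hCE⟩ := Matroid.dep_iff.1 hdep
    have hlt : k < C.ncard := by
      by_contra h
      exact hni ((hunif C).2 ⟨hCE, by omega⟩)
    obtain ⟨D, hDC, hD⟩ := Set.exists_subset_card_eq (s := C) (n := k + 1) (by omega)
    have hDdep : M.Dep D := by
      rw [Matroid.dep_iff]
      refine ⟨fun hI => ?_, hDC.trans hCE⟩
      have := ((hunif D).1 hI).2
      omega
    have hEq := hmin D hDdep hDC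
    exact ⟨hCE, by rw [← hEq]; exact hD⟩
  · rintro ⟨hCE, hcard⟩
    have hdep : M.Dep C := by
      rw [Matroid.dep_iff]
      refine ⟨fun hI => ?_, hCE⟩
      have := ((hunif C).1 hI).2
      omega
    refine ⟨hdep, fun D hD hDC => ?_⟩
    obtain ⟨hni, hDE⟩ := Matroid.dep_iff.1 hD
    have hk1 : k < D.ncard := by
      by_contra h
      exact hni ((hunif D).2 ⟨hDE, by omega⟩)
    exact Set.eq_of_subset_of_ncard_le hDC (by omega) (hE.subset hCE)

lemma rk_eq (hE : M.E.Finite)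
    (hunif : ∀ I : Set α, M.Indep I ↔ I ⊆ M.E ∧ I.ncard ≤ k) {S : Set α} (hS : S ⊆ M.E) :
    rk M S = min S.ncard k := by
  have hSfin : S.Finite := hE.subset hS
  have hset : {m : ℕ | ∃ I, I ⊆ S ∧ M.Indep I ∧ I.ncard = m} = Set.Iic (min S.ncard k) := by
    ext m
    simp only [mem_setOf_eq, mem_Iic, le_min_iff]
    constructor
    · rintro ⟨I, hIS, hI, rfl⟩
      exact ⟨Set.ncard_le_ncard hIS hSfin, ((hunif I).1 hI).2⟩
    · rintro ⟨h1, h2⟩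
      obtain ⟨t, hts, htc⟩ := Set.exists_subset_card_eq (s := S) (n := m) h1
      exact ⟨t, hts, (hunif t).2 ⟨hts.trans hS, by omega⟩, htc⟩
  rw [rk, hset, csSup_Iic]

lemma nullity_eq (hE : M.E.Finite)
    (hunif : ∀ I : Set α, M.Indep I ↔ I ⊆ M.E ∧ I.ncard ≤ k) {S : Set α} (hS : S ⊆ M.E) :
    nullity M S = S.ncard - k := by
  rw [nullity, rk_eq hE hunif hS]
  omega

lemma supp_subset_ground {A : Set (Set α)} (hA : A ⊆ circuits M) : supp A ⊆ M.E := by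
  rintro x ⟨C, hC, hxC⟩
  exact (hA hC).1.subset_ground hxC

lemma finite_of_subset_circuits (hE : M.E.Finite) {A : Set (Set α)} (hA : A ⊆ circuits M) :
    A.Finite :=
  hE.finite_subsets.subset fun C hC => (hA hC).1.subset_ground

lemma memA0_iff (hE : M.E.Finite)
    (hunif : ∀ I : Set α, M.Indep I ↔ I ⊆ M.E ∧ I.ncard ≤ k) {A : Set (Set α)}
    (hA : A ⊆ circuits M) :
    A ∈ A0 M ↔ (supp A).ncard - k < A.ncard := by
  rw [A0, mem_setOf_eq, nullity_eq hE hunif (supp_subset_ground hA)]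
  exact ⟨fun h => h.2, fun h => ⟨hA, h⟩⟩

lemma supp_card_ge_one (hE : M.E.Finite)
    (hunif : ∀ I : Set α, M.Indep I ↔ I ⊆ M.E ∧ I.ncard ≤ k) {A : Set (Set α)}
    (hA : A ⊆ circuits M) (hne : A.Nonempty) : k + 1 ≤ (supp A).ncard := by
  obtain ⟨C, hC⟩ := hne
  have hCA : C ⊆ supp A := subset_sUnion_of_mem hC
  have hc := (circuit_char hE hunif).1 (hA hC)
  calc k + 1 = C.ncard := hc.2.symm
    _ ≤ _ := Set.ncard_le_ncard hCA (hE.subset (supp_subset_ground hA))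

lemma supp_card_ge_two (hE : M.E.Finite)
    (hunif : ∀ I : Set α, M.Indep I ↔ I ⊆ M.E ∧ I.ncard ≤ k) {A : Set (Set α)}
    (hA : A ⊆ circuits M) (h2 : 2 ≤ A.ncard) : k + 2 ≤ (supp A).ncard := by
  have hAfin : A.Finite := finite_of_subset_circuits hE hA
  have hsf : (supp A).Finite := hE.subset (supp_subset_ground hA)
  obtain ⟨C1, hC1, C2, hC2, hne⟩ := (Set.one_lt_ncard hAfin).1 (by omega)
  by_contra h
  push_neg at h
  have hc1 := (circuit_char hE hunif).1 (hA hC1)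
  have hc2 := (circuit_char hE hunif).1 (hA hC2)
  have e1 : C1 = supp A :=
    Set.eq_of_subset_of_ncard_le (subset_sUnion_of_mem hC1) (by omega) hsf
  have e2 : C2 = supp A :=
    Set.eq_of_subset_of_ncard_le (subset_sUnion_of_mem hC2) (by omega) hsf
  exact hne (e1.trans e2.symm)

lemma supp_card_le (hE : M.E.Finite) {A : Set (Set α)} (hA : A ⊆ circuits M) :
    (supp A).ncard ≤ M.E.ncard :=
  Set.ncard_le_ncard (supp_subset_ground hA) hE

/-- 𝒜₀ is up-closed. -/
lemma up_closed (hE : M.E.Finite)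
    (hunif : ∀ I : Set α, M.Indep I ↔ I ⊆ M.E ∧ I.ncard ≤ k)
    (hn3 : M.E.ncard ≤ k + 3) {A A' : Set (Set α)}
    (hA' : A' ∈ A0 M) (hsub : A' ⊆ A) (hA : A ⊆ circuits M) : A ∈ A0 M := by
  have hA'c : A' ⊆ circuits M := hA'.1
  have hAfin : A.Finite := finite_of_subset_circuits hE hA
  have hA'fin : A'.Finite := hAfin.subset hsub
  have h0 := (memA0_iff hE hunif hA'c).1 hA'
  have hne : A'.Nonempty := by
    rcases A'.eq_empty_or_nonempty with rfl | h
    · simp [supp] at h0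
    · exact h
  have h1 := supp_card_ge_one hE hunif hA'c hne
  have h2 : 2 ≤ A'.ncard := by omega
  have h3 := supp_card_ge_two hE hunif hA'c h2
  have h4 : 3 ≤ A'.ncard := by omega
  rw [memA0_iff hE hunif hA]
  have hAle := supp_card_le hE hA
  by_cases hss : supp A ⊆ supp A'
  · have heq : supp A = supp A' := Subset.antisymm hss (sUnion_mono hsub)
    have hle := Set.ncard_le_ncard hsub hAfin
    rw [heq]
    omega
  · obtain ⟨x, hxA, hxA'⟩ := not_subset.1 hss
    obtain ⟨C, hC, hxC⟩ := hxA
    have hCA' : C ∉ A' := fun h => hxA' ⟨C, h, hxC⟩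
    have hins : insert C A' ⊆ A := insert_subset hC hsub
    have hstep : A'.ncard + 1 ≤ A.ncard := by
      calc A'.ncard + 1 = (insert C A').ncard :=
            (Set.ncard_insert_of_notMem hCA' hA'fin).symm
        _ ≤ A.ncard := Set.ncard_le_ncard hins hAfin
    omega

/-- 𝒜₀ is closed under ε. -/
lemma eps_eq (hE : M.E.Finite)
    (hunif : ∀ I : Set α, M.Indep I ↔ I ⊆ M.E ∧ I.ncard ≤ k)
    (hn3 : M.E.ncard ≤ k + 3) : eps (A0 M) = A0 M := by
  refine Subset.antisymm ?_ subset_union_left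
  intro B hB
  simp only [eps, mem_union, mem_setOf_eq] at hB
  rcases hB with hB | ⟨A1, hA1, A2, hA2, hI, C, hC, rfl⟩
  · exact hB
  have h1c : A1 ⊆ circuits M := hA1.1
  have h2c : A2 ⊆ circuits M := hA2.1
  have hIc : A1 ∩ A2 ⊆ circuits M := inter_subset_left.trans h1c
  have hfin1 : A1.Finite := finite_of_subset_circuits hE h1c
  have hfin2 : A2.Finite := finite_of_subset_circuits hE h2c
  have hfinI : (A1 ∩ A2).Finite := hfin1.subset inter_subset_left
  have hfinU : (A1 ∪ A2).Finite := hfin1.union hfin2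
  have hBc : (A1 ∪ A2) \ {C} ⊆ circuits M := diff_subset.trans (union_subset h1c h2c)
  -- cardinality facts
  have hm1 := (memA0_iff hE hunif h1c).1 hA1
  have hm2 := (memA0_iff hE hunif h2c).1 hA2
  have hmI : (A1 ∩ A2).ncard ≤ (supp (A1 ∩ A2)).ncard - k := by
    have := (memA0_iff hE hunif hIc).not.1 hI
    omega
  have hIpos : 0 < (A1 ∩ A2).ncard := (Set.ncard_pos hfinI).2 ⟨C, hC⟩
  have hs1 := supp_card_ge_one hE hunif h1c ⟨C, hC.1⟩
  have hs2 := supp_card_ge_one hE hunif h2c ⟨C, hC.2⟩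
  have hsI := supp_card_ge_one hE hunif hIc ⟨C, hC⟩
  have h1ge2 : 2 ≤ A1.ncard := by omega
  have h2ge2 : 2 ≤ A2.ncard := by omega
  have hs1' := supp_card_ge_two hE hunif h1c h1ge2
  have hs2' := supp_card_ge_two hE hunif h2c h2ge2
  have h1ge3 : 3 ≤ A1.ncard := by omega
  have h2ge3 : 3 ≤ A2.ncard := by omega
  have hCU : C ∈ A1 ∪ A2 := Or.inl hC.1
  have hBcard : ((A1 ∪ A2) \ {C}).ncard = A1.ncard + A2.ncard - (A1 ∩ A2).ncard - 1 := by
    rw [Set.ncard_diff_singleton_of_mem hCU]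
    have := Set.ncard_union_add_ncard_inter A1 A2 hfin1 hfin2
    omega
  have hfins1 : (supp A1).Finite := hE.subset (supp_subset_ground h1c)
  have hfins2 : (supp A2).Finite := hE.subset (supp_subset_ground h2c)
  have hmon1 : (supp (A1 ∩ A2)).ncard ≤ (supp A1).ncard :=
    Set.ncard_le_ncard (sUnion_mono inter_subset_left) hfins1
  have hmon2 : (supp (A1 ∩ A2)).ncard ≤ (supp A2).ncard :=
    Set.ncard_le_ncard (sUnion_mono inter_subset_right) hfins2
  have hsBle : (supp ((A1 ∪ A2) \ {C})).ncard ≤ k + 3 :=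
    le_trans (supp_card_le hE hBc) hn3
  rw [memA0_iff hE hunif hBc]
  by_cases hcase : (supp ((A1 ∪ A2) \ {C})).ncard ≤ (supp A1).ncard ∨
      (supp ((A1 ∪ A2) \ {C})).ncard ≤ (supp A2).ncard
  · rcases hcase with h | h <;> omega
  · push_neg at hcase
    obtain ⟨hgt1, hgt2⟩ := hcase
    have hne12 : supp A1 ≠ supp A2 := by
      intro heq
      have hsub' : supp ((A1 ∪ A2) \ {C}) ⊆ supp A1 := by
        refine (sUnion_mono diff_subset).trans ?_
        rw [sUnion_union]
        exact union_subset subset_rfl heq.symm.subset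
      exact absurd (Set.ncard_le_ncard hsub' hfins1) (by omega)
    have hs1le : (supp A1).ncard ≤ k + 2 := by omega
    have hs2le : (supp A2).ncard ≤ k + 2 := by omega
    have hinter : (supp A1 ∩ supp A2).ncard ≤ k + 1 := by
      by_contra h
      push_neg at h
      have e1 : supp A1 ∩ supp A2 = supp A1 :=
        Set.eq_of_subset_of_ncard_le inter_subset_left (by omega) hfins1
      have e2 : supp A1 ∩ supp A2 = supp A2 :=
        Set.eq_of_subset_of_ncard_le inter_subset_right (by omega) hfins2
      exact hne12 (e1.symm.trans e2)
    have hsIle : (supp (A1 ∩ A2)).ncard ≤ k + 1 := by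
      refine le_trans (Set.ncard_le_ncard ?_ (hfins1.subset inter_subset_left)) hinter
      exact subset_inter (sUnion_mono inter_subset_left) (sUnion_mono inter_subset_right)
    omega

end Aux

/-- for the uniform matroid U(k,n) with k ≥ n − 3, the dependent sets of
δM are exactly 𝒜₀, i.e. δM = (𝒞, 𝒜₀). -/
theorem uniform_derivedDep_eq_A0 (M : Matroid α) (k n : ℕ) (hk : 0 < k) (hkn : k < n)
    (hge : n - 3 ≤ k)
    (hE : M.E.Finite) (hcardE : M.E.ncard = n)
    (hunif : ∀ I : Set α, M.Indep I ↔ I ⊆ M.E ∧ I.ncard ≤ k) :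
    derivedDep M = A0 M := by
  have hn3 : M.E.ncard ≤ k + 3 := by omega
  have hAi : ∀ i, Ai M i = A0 M := by
    intro i
    induction i with
    | zero => rfl
    | succ i ih =>
      show up (circuits M) (eps (Ai M i)) = A0 M
      rw [ih, eps_eq hE hunif hn3]
      ext A
      constructor
      · rintro ⟨hAc, A', hA', hsub⟩
        exact up_closed hE hunif hn3 hA' hsub hAc
      · intro hA
        exact ⟨hA.1, A, hA, subset_rfl⟩
  ext A
  simp [derivedDep, hAi]

end DM
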